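/- Let D be the minimal Dress ring of ℝ(X), and set a = X/(1+X^2) and b = (X^2−1)/(1+X^2), both elements of D. Then the ideal of D generated by a and b is all of D, yet for every z ∈ D the element a + b·z is not a unit of D. (Hence the Dedekind domain D does not have 1 in the stable range, although it has square stable range one.) -/
import Mathlib

open Polynomial

namespace MDRaux

noncomputable abbrev A : Polynomial ℝ →+* RatFunc ℝ := algebraMap (Polynomial ℝ) (RatFunc ℝ)

/-- The subring of rational functions expressible with an everywhere-nonvanishing
denominator. -/
noncomputable def Sgood : Subring (RatFunc ℝ) where
  carrier := {f | ∃ p q : Polynomial ℝ, (∀ t : ℝ, q.eval t ≠ 0) ∧ f * A q = A p}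
  one_mem' := ⟨1, 1, fun t => by simp, by simp⟩
  zero_mem' := ⟨0, 1, fun t => by simp, by simp⟩
  mul_mem' := by
    rintro f g ⟨p₁, q₁, h₁, e₁⟩ ⟨p₂, q₂, h₂, e₂⟩
    refine ⟨p₁ * p₂, q₁ * q₂, fun t => by simp [h₁ t, h₂ t], ?_⟩
    rw [map_mul, map_mul, ← e₁, ← e₂]; ring
  add_mem' := by
    rintro f g ⟨p₁, q₁, h₁, e₁⟩ ⟨p₂, q₂, h₂, e₂⟩
    refine ⟨p₁ * q₂ + p₂ * q₁, q₁ * q₂, fun t => by simp [h₁ t, h₂ t], ?_⟩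
    rw [map_add, map_mul, map_mul, map_mul, ← e₁, ← e₂]; ring
  neg_mem' := by
    rintro f ⟨p, q, h, e⟩
    exact ⟨-p, q, h, by rw [map_neg, ← e]; ring⟩

lemma gen_mem_Sgood (x : RatFunc ℝ) : (1 + x ^ 2)⁻¹ ∈ Sgood := by
  by_cases h : 1 + x ^ 2 = 0
  · rw [h, inv_zero]; exact Sgood.zero_mem
  · refine ⟨x.denom ^ 2, x.num ^ 2 + x.denom ^ 2, ?_, ?_⟩
    · intro t ht
      have hn : x.num.eval t = 0 ∧ x.denom.eval t = 0 := by
        have := ht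
        simp only [eval_add, eval_pow] at this
        constructor <;> nlinarith [sq_nonneg (x.num.eval t), sq_nonneg (x.denom.eval t)]
      obtain ⟨u, v, huv⟩ := RatFunc.isCoprime_num_denom x
      have := congrArg (Polynomial.eval t) huv
      simp [hn.1, hn.2] at this
    · have hd : A x.denom ≠ 0 := RatFunc.algebraMap_ne_zero (RatFunc.denom_ne_zero x)
      have hx : x * A x.denom = A x.num := by
        have h0 := RatFunc.num_div_denom x
        rw [div_eq_iff hd] at h0
        exact h0.symm
      have key : (1 + x ^ 2) * A (x.denom ^ 2) = A (x.num ^ 2 + x.denom ^ 2) := by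
        rw [map_add, map_pow, map_pow, ← hx]; ring
      rw [map_add, map_pow, map_pow] at key ⊢
      field_simp
      linear_combination -key

lemma D_le_Sgood :
    Subring.closure {s : RatFunc ℝ | ∃ x : RatFunc ℝ, s = (1 + x ^ 2)⁻¹} ≤ Sgood := by
  rw [Subring.closure_le]
  rintro s ⟨x, rfl⟩
  exact gen_mem_Sgood x

lemma one_plus_X_sq_ne_zero : (1 + RatFunc.X ^ 2 : RatFunc ℝ) ≠ 0 := by
  have : (1 + RatFunc.X ^ 2 : RatFunc ℝ) = A (1 + Polynomial.X ^ 2) := by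
    rw [map_add, map_pow, map_one, RatFunc.algebraMap_X]
  rw [this]
  apply RatFunc.algebraMap_ne_zero
  intro h
  have := congrArg (Polynomial.eval (0 : ℝ)) h
  simp at this

end MDRaux

open MDRaux

/-- In the minimal Dress ring `D` of `ℝ(X)`, with `a = X/(1+X²)` and
`b = (X²−1)/(1+X²)`, the ideal `(a, b)` is all of `D`, yet `a + b·z` is not a unit of `D`
for any `z ∈ D`.  (`D` does not have `1` in the stable range.) -/
theorem minimalDressRing_not_stable_range_one
    (ha : RatFunc.X / (1 + RatFunc.X ^ 2)
      ∈ Subring.closure {s : RatFunc ℝ | ∃ x : RatFunc ℝ, s = (1 + x ^ 2)⁻¹})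
    (hb : (RatFunc.X ^ 2 - 1) / (1 + RatFunc.X ^ 2)
      ∈ Subring.closure {s : RatFunc ℝ | ∃ x : RatFunc ℝ, s = (1 + x ^ 2)⁻¹}) :
    Ideal.span {(⟨_, ha⟩ :
        ↥(Subring.closure {s : RatFunc ℝ | ∃ x : RatFunc ℝ, s = (1 + x ^ 2)⁻¹})),
      ⟨_, hb⟩} = ⊤ ∧
    ∀ z : ↥(Subring.closure {s : RatFunc ℝ | ∃ x : RatFunc ℝ, s = (1 + x ^ 2)⁻¹}),
      ¬ IsUnit ((⟨_, ha⟩ :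
          ↥(Subring.closure {s : RatFunc ℝ | ∃ x : RatFunc ℝ, s = (1 + x ^ 2)⁻¹}))
        + ⟨_, hb⟩ * z) := by
  set D := Subring.closure {s : RatFunc ℝ | ∃ x : RatFunc ℝ, s = (1 + x ^ 2)⁻¹} with hD
  set a : D := ⟨_, ha⟩ with ha'
  set b : D := ⟨_, hb⟩ with hb'
  have hne := one_plus_X_sq_ne_zero
  constructor
  · rw [Ideal.eq_top_iff_one]
    have key : (4 : D) * a * a + b * b = 1 := by
      ext
      push_cast [ha', hb']
      field_simp
      rw [show (((4 : D) : RatFunc ℝ)) = 4 from rfl]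
      ring
    rw [← key]
    exact add_mem
      (Ideal.mul_mem_left _ _ (Ideal.subset_span (Set.mem_insert _ _)))
      (Ideal.mul_mem_left _ _ (Ideal.subset_span (Set.mem_insert_of_mem _ rfl)))
  · intro z hu
    obtain ⟨w, hw⟩ : ∃ w : D, (a + b * z) * w = 1 := by
      obtain ⟨u, hu⟩ := hu
      exact ⟨↑u⁻¹, by rw [← hu]; exact_mod_cast congrArg Subtype.val u.mul_inv⟩
    -- move to RatFunc ℝ
    have hmemu : ((a : RatFunc ℝ) + b * z) ∈ Sgood := by
      have : ((a + b * z : D) : RatFunc ℝ) ∈ Sgood := D_le_Sgood (a + b * z).2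
      push_cast at this; exact this
    have hmemw : ((w : D) : RatFunc ℝ) ∈ Sgood := D_le_Sgood w.2
    have hmemz : ((z : D) : RatFunc ℝ) ∈ Sgood := D_le_Sgood z.2
    obtain ⟨p, q, hq, hpq⟩ := hmemu
    obtain ⟨p', q', hq', hpq'⟩ := hmemw
    obtain ⟨r, s, hs, hrs⟩ := hmemz
    have huvRF : ((a : RatFunc ℝ) + b * z) * w = 1 := by
      have := congrArg (Subtype.val) hw
      push_cast at this; exact this
    -- p p' = q q'
    have hpp' : p * p' = q * q' := by
      apply RatFunc.algebraMap_injective ℝ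
      rw [map_mul, map_mul, ← hpq, ← hpq']
      calc ((a : RatFunc ℝ) + b * z) * A q * ((w : RatFunc ℝ) * A q')
          = (((a : RatFunc ℝ) + b * z) * w) * (A q * A q') := by ring
        _ = A q * A q' := by rw [huvRF, one_mul]
    -- the key polynomial identity
    have hkey : p * ((1 + Polynomial.X ^ 2) * s) =
        q * (Polynomial.X * s + (Polynomial.X ^ 2 - 1) * r) := by
      apply RatFunc.algebraMap_injective ℝ
      have expand : A (p * ((1 + Polynomial.X ^ 2) * s)) =
          ((a : RatFunc ℝ) + (b : RatFunc ℝ) * (z : RatFunc ℝ)) * A q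
            * ((1 + RatFunc.X ^ 2) * A s) := by
        rw [hpq, map_mul, map_mul, map_add, map_pow, map_one, RatFunc.algebraMap_X]
      rw [expand]
      have hA : (a : RatFunc ℝ) * (1 + RatFunc.X ^ 2) = RatFunc.X := by
        rw [ha']; field_simp
      have hB : (b : RatFunc ℝ) * (1 + RatFunc.X ^ 2) = RatFunc.X ^ 2 - 1 := by
        rw [hb']; field_simp
      have hZ : (z : RatFunc ℝ) * A s = A r := hrs
      calc ((a : RatFunc ℝ) + (b : RatFunc ℝ) * (z : RatFunc ℝ)) * A q
            * ((1 + RatFunc.X ^ 2) * A s)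
          = A q * ((a : RatFunc ℝ) * (1 + RatFunc.X ^ 2) * A s
              + (b : RatFunc ℝ) * (1 + RatFunc.X ^ 2) * ((z : RatFunc ℝ) * A s)) := by ring
        _ = A q * (RatFunc.X * A s + (RatFunc.X ^ 2 - 1) * A r) := by rw [hA, hB, hZ]
        _ = A (q * (Polynomial.X * s + (Polynomial.X ^ 2 - 1) * r)) := by
            simp only [map_mul, map_add, map_sub, map_pow, map_one, RatFunc.algebraMap_X]
    -- evaluate at 1 and -1
    have hp : ∀ t : ℝ, p.eval t ≠ 0 := by
      intro t ht
      have := congrArg (Polynomial.eval t) hpp'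
      simp only [eval_mul, ht, zero_mul] at this
      exact mul_ne_zero (hq t) (hq' t) this.symm
    have h1 := congrArg (Polynomial.eval 1) hkey
    have h2 := congrArg (Polynomial.eval (-1)) hkey
    simp only [eval_mul, eval_add, eval_sub, eval_pow, eval_one, eval_X] at h1 h2
    norm_num at h1 h2
    -- q(1) = 2 p(1), q(-1) = -2 p(-1)
    have hq1 : q.eval 1 = 2 * p.eval 1 := by
      have hne1 := hs 1
      have hfac : (2 * p.eval 1 - q.eval 1) * s.eval 1 = 0 := by linear_combination h1
      rcases mul_eq_zero.mp hfac with h | h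
      · linarith
      · exact absurd h hne1
    have hq2 : q.eval (-1) = -2 * p.eval (-1) := by
      have hne1 := hs (-1)
      have hfac : (2 * p.eval (-1) + q.eval (-1)) * s.eval (-1) = 0 := by
        linear_combination h2
      rcases mul_eq_zero.mp hfac with h | h
      · linarith
      · exact absurd h hne1
    -- IVT on p*q
    have hcont : Continuous fun t : ℝ => (p * q).eval t := (p * q).continuous
    have hpos : 0 < (p * q).eval 1 := by
      rw [eval_mul, hq1]
      nlinarith [mul_self_pos.mpr (hp 1)]
    have hneg : (p * q).eval (-1) < 0 := by
      rw [eval_mul, hq2]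
      nlinarith [mul_self_pos.mpr (hp (-1))]
    obtain ⟨c, _, hc⟩ := intermediate_value_Icc (by norm_num : (-1 : ℝ) ≤ 1)
      hcont.continuousOn (Set.mem_Icc.mpr ⟨le_of_lt hneg, le_of_lt hpos⟩)
    simp only [eval_mul] at hc
    exact hp c (by
      rcases mul_eq_zero.mp hc with h | h
      · exact h
      · exact absurd h (hq c))
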